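/- Let a : ℝ → ℝ be continuous with |a(t)| ≤ a₀ for all t, and let x, v : ℝ → ℝ be differentiable functions satisfying the time-reversed system x'(t) = −v(t), v'(t) = −(a(t) − (1/4)v(t) + x(t) − x(t)² − x(t)³) on [0, T]. Then, writing Vmin = V((−1−√5)/2) for the global minimum of the potential, the energy satisfies (d/dt)E(x(t), v(t)) = (1/4)v(t)² − a(t)v(t) ≤ (3/2)(E(x(t), v(t)) − Vmin) + a₀²/2 for all t ∈ [0, T]. -/

import Mathlib

/-- The potential of the oscillator. -/
noncomputable def V (x : ℝ) : ℝ := x ^ 4 / 4 + x ^ 3 / 3 - x ^ 2 / 2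

/-- The energy of the oscillator. -/
noncomputable def E (x v : ℝ) : ℝ := v ^ 2 / 2 + V x

lemma V_ge_Vmin (y : ℝ) : V ((-1 - Real.sqrt 5) / 2) ≤ V y := by
  have hs : Real.sqrt 5 ^ 2 = 5 := Real.sq_sqrt (by norm_num)
  have hs0 : (0:ℝ) ≤ Real.sqrt 5 := Real.sqrt_nonneg 5
  unfold V
  have h2 : (2:ℝ) ≤ Real.sqrt 5 := by nlinarith
  nlinarith [sq_nonneg ((y - (-1 - Real.sqrt 5) / 2) * (y + 1/6 - Real.sqrt 5 / 2)),
    mul_nonneg (sq_nonneg (y - (-1 - Real.sqrt 5) / 2)) (by linarith : (0:ℝ) ≤ 3 * Real.sqrt 5 - 1)]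

/-- Along the time-reversed forced oscillator
`ẋ = -v, v̇ = -(a(t) - (1/4)v + x - x² - x³)` with `|a(t)| ≤ a₀`, the energy
has derivative `(1/4)v² - a·v`, which is bounded by the Grönwall-type estimate
`(3/2)(E - Vmin) + a₀²/2`, where `Vmin = V((-1-√5)/2)`. -/
theorem stmt_11 (a : ℝ → ℝ) (a₀ T : ℝ) (ha : Continuous a)
    (hbound : ∀ t, |a t| ≤ a₀)
    (x v : ℝ → ℝ) (hx : Differentiable ℝ x) (hv : Differentiable ℝ v)
    (hode : ∀ t ∈ Set.Icc (0 : ℝ) T, deriv x t = -(v t) ∧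
      deriv v t = -(a t - (1/4 : ℝ) * v t + x t - (x t) ^ 2 - (x t) ^ 3)) :
    ∀ t ∈ Set.Icc (0 : ℝ) T,
      HasDerivAt (fun s => E (x s) (v s)) ((1/4 : ℝ) * (v t) ^ 2 - a t * v t) t ∧
      (1/4 : ℝ) * (v t) ^ 2 - a t * v t ≤
        (3/2 : ℝ) * (E (x t) (v t) - V ((-1 - Real.sqrt 5) / 2)) + a₀ ^ 2 / 2 := by
  intro t ht
  obtain ⟨hx', hv'⟩ := hode t ht
  constructor
  · have hxd : HasDerivAt x (-(v t)) t := hx' ▸ (hx t).hasDerivAt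
    have hvd : HasDerivAt v
        (-(a t - (1/4 : ℝ) * v t + x t - (x t) ^ 2 - (x t) ^ 3)) t :=
      hv' ▸ (hv t).hasDerivAt
    have h1 := ((hvd.pow 2).div_const 2).add
      ((((hxd.pow 4).div_const 4).add ((hxd.pow 3).div_const 3)).sub
        ((hxd.pow 2).div_const 2))
    have heq : (fun s => E (x s) (v s)) =
        fun s => v s ^ 2 / 2 + (x s ^ 4 / 4 + x s ^ 3 / 3 - x s ^ 2 / 2) := by
      funext s; simp [E, V]
    rw [heq]
    refine h1.congr_deriv ?_
    norm_num
    ring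
  · have hb := hbound t
    have ha0 : 0 ≤ a₀ := le_trans (abs_nonneg _) hb
    have habs : -a₀ ≤ a t ∧ a t ≤ a₀ := abs_le.mp hb
    have hV := V_ge_Vmin (x t)
    have hE : E (x t) (v t) = (v t) ^ 2 / 2 + V (x t) := rfl
    rw [hE]
    have ha2 : a t ^ 2 ≤ a₀ ^ 2 := sq_le_sq' habs.1 habs.2
    nlinarith [sq_nonneg (v t + a t), ha2, hV]
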